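/- Let (E, Φ) be a representation of a Euclidean Jordan algebra J, c = (c₁,…,c_k) a CSOI, and E = ⊕_j E_j the decomposition with E_j = Φ(c_j)E. For j fixed and x ∈ J_j = J(c_j,1): (i) Φ(x)E_i = 0 for i ≠ j; (ii) Φ(x)E_j ⊆ E_j; and (iii) x ↦ Φ(x)|_{E_j} is a representation of the Jordan algebra J_j on E_j. -/
import Mathlib


open scoped RealInnerProductSpace

/-- A Euclidean Jordan algebra structure on a finite-dimensional real inner
product space: a commutative bilinear product satisfying the Jordan identity,
with unit `one`, such that the inner product is associative. -/
structure EJA (J : Type) [NormedAddCommGroup J] [InnerProductSpace ℝ J] : Type where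
  mul : J →ₗ[ℝ] J →ₗ[ℝ] J
  comm : ∀ x y : J, mul x y = mul y x
  jordan : ∀ x y : J, mul (mul x y) (mul x x) = mul x (mul y (mul x x))
  one : J
  one_mul : ∀ x : J, mul one x = x
  assoc_inner : ∀ x y z : J, ⟪mul x y, z⟫ = ⟪y, mul x z⟫

variable {J : Type} [NormedAddCommGroup J] [InnerProductSpace ℝ J] [FiniteDimensional ℝ J]

/-- The Peirce `μ`-eigenspace of the idempotent `c`. -/
noncomputable def EJA.peirce (A : EJA J) (c : J) (μ : ℝ) : Submodule ℝ J :=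
  Module.End.eigenspace (A.mul c : Module.End ℝ J) μ

/-- A complete system of orthogonal idempotents. -/
def EJA.IsCSOI (A : EJA J) {k : ℕ} (c : Fin k → J) : Prop :=
  (∀ j, A.mul (c j) (c j) = c j) ∧ (∀ i j, i ≠ j → A.mul (c i) (c j) = 0) ∧
    (∑ j, c j) = A.one

/-- `y` is the Jordan inverse of `x`:  `x∘y = e` and `x²∘y = x`. -/
def EJA.IsInv (A : EJA J) (x y : J) : Prop :=
  A.mul x y = A.one ∧ A.mul (A.mul x x) y = x

variable {E : Type} [NormedAddCommGroup E] [InnerProductSpace ℝ E] [FiniteDimensional ℝ E]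

/-- A representation of the Euclidean Jordan algebra `J` on the Euclidean
space `E`: a unital Jordan algebra morphism into symmetric endomorphisms. -/
def EJA.IsRep (A : EJA J) (Φ : J →ₗ[ℝ] E →ₗ[ℝ] E) : Prop :=
  (∀ (x : J) (ξ η : E), ⟪Φ x ξ, η⟫ = ⟪ξ, Φ x η⟫) ∧
  (∀ x y : J, Φ (A.mul x y) = (2 : ℝ)⁻¹ • (Φ x ∘ₗ Φ y + Φ y ∘ₗ Φ x)) ∧
  Φ A.one = LinearMap.id

/-- The subspace `E_j`: the `1`-eigenspace of the projection `Φ(c_j)`. -/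
noncomputable def EJA.repSpace (A : EJA J) (Φ : J →ₗ[ℝ] E →ₗ[ℝ] E)
    {k : ℕ} (c : Fin k → J) (j : Fin k) : Submodule ℝ E :=
  Module.End.eigenspace (Φ (c j) : Module.End ℝ E) 1

/-- For `x ∈ J_j = J(c_j,1)`: `Φ(x)` kills `E_i` for `i ≠ j`, preserves `E_j`,
and `x ↦ Φ(x)|_{E_j}` is a (unital, Jordan) representation of `J_j` on `E_j`. -/
theorem stmt11 (A : EJA J) (Φ : J →ₗ[ℝ] E →ₗ[ℝ] E) (hΦ : A.IsRep Φ)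
    (k : ℕ) (c : Fin k → J) (hc : A.IsCSOI c)
    (j : Fin k) (x : J) (hx : x ∈ A.peirce (c j) 1) :
    (∀ i, i ≠ j → ∀ ξ ∈ A.repSpace Φ c i, Φ x ξ = 0) ∧
    (∀ ξ ∈ A.repSpace Φ c j, Φ x ξ ∈ A.repSpace Φ c j) ∧
    (∀ ξ ∈ A.repSpace Φ c j, Φ (c j) ξ = ξ) ∧
    (∀ x' ∈ A.peirce (c j) 1, ∀ ξ ∈ A.repSpace Φ c j,
      Φ (A.mul x x') ξ = (2 : ℝ)⁻¹ • (Φ x (Φ x' ξ) + Φ x' (Φ x ξ))) := by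
  obtain ⟨hsym, hmul, hone⟩ := hΦ
  obtain ⟨hidem, horth, hsum⟩ := hc
  have hx' : A.mul (c j) x = x := by
    have := hx
    rw [EJA.peirce, Module.End.mem_eigenspace_iff] at this
    simpa using this
  -- Φ(c i) is a projection
  have hproj : ∀ i : Fin k, ∀ η : E, Φ (c i) (Φ (c i) η) = Φ (c i) η := by
    intro i η
    have h := hmul (c i) (c i)
    rw [hidem i] at h
    have := congrArg (fun f : E →ₗ[ℝ] E => f η) h
    simp only [LinearMap.smul_apply, LinearMap.add_apply, LinearMap.comp_apply] at this
    rw [← two_smul ℝ, smul_smul] at this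
    norm_num at this
    exact this.symm
  -- for ξ ∈ E_i with i ≠ j, Φ(c j) ξ = 0
  have hkill : ∀ i : Fin k, i ≠ j → ∀ ξ : E, Φ (c i) ξ = ξ → Φ (c j) ξ = 0 := by
    intro i hij ξ hξ
    have h := hmul (c j) (c i)
    rw [horth j i (Ne.symm hij)] at h
    have h0 := congrArg (fun f : E →ₗ[ℝ] E => f ξ) h
    simp only [map_zero, LinearMap.zero_apply, LinearMap.smul_apply, LinearMap.add_apply,
      LinearMap.comp_apply, hξ] at h0
    -- 0 = 2⁻¹ • (Φ(c j) ξ + Φ(c i)(Φ(c j) ξ))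
    have h1 : Φ (c j) ξ + Φ (c i) (Φ (c j) ξ) = 0 := by
      have := h0.symm
      have h2 : (2 : ℝ) • ((2 : ℝ)⁻¹ • (Φ (c j) ξ + Φ (c i) (Φ (c j) ξ))) = (2:ℝ) • (0 : E) := by
        rw [this]
      simpa [smul_smul] using h2
    have h3 := congrArg (Φ (c i)) h1
    simp only [map_add, map_zero, hproj i] at h3
    have h4 : Φ (c i) (Φ (c j) ξ) = 0 := by
      have := h3
      rw [← two_smul ℝ] at this
      have := congrArg (fun v => (2:ℝ)⁻¹ • v) this
      simpa [smul_smul] using this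
    rw [h4, add_zero] at h1
    exact h1
  have hΦx : ∀ η : E, Φ x η = (2 : ℝ)⁻¹ • (Φ (c j) (Φ x η) + Φ x (Φ (c j) η)) := by
    intro η
    have h := hmul (c j) x
    rw [hx'] at h
    have := congrArg (fun f : E →ₗ[ℝ] E => f η) h
    simpa using this
  refine ⟨?_, ?_, ?_, ?_⟩
  · intro i hij ξ hξ
    rw [EJA.repSpace, Module.End.mem_eigenspace_iff] at hξ
    simp only [one_smul] at hξ
    have hξ0 : Φ (c j) ξ = 0 := hkill i hij ξ hξ
    have h := hΦx ξ
    rw [hξ0, map_zero, add_zero] at h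
    -- Φ x ξ = 2⁻¹ • Φ(c j)(Φ x ξ)
    have h2 := congrArg (Φ (c j)) h
    rw [map_smul, hproj j] at h2
    -- Φ(c j)(Φ x ξ) = 2⁻¹ • Φ(c j)(Φ x ξ)  ⇒  = 0
    set η := Φ (c j) (Φ x ξ) with hη
    have h5 : ((1:ℝ) - (2:ℝ)⁻¹) • η = 0 := by
      rw [sub_smul, one_smul, sub_eq_zero]
      exact h2
    have hη0 : η = 0 := by
      have hc2 : ((1:ℝ) - (2:ℝ)⁻¹) ≠ 0 := by norm_num
      exact (smul_eq_zero.mp h5).resolve_left hc2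
    rw [h, hη0, smul_zero]
  · intro ξ hξ
    rw [EJA.repSpace, Module.End.mem_eigenspace_iff] at hξ ⊢
    simp only [one_smul] at hξ ⊢
    have h := hΦx ξ
    rw [hξ] at h
    have h2 := congrArg (Φ (c j)) h
    rw [map_smul, map_add, hproj j] at h2
    rw [← two_smul ℝ (Φ (c j) (Φ x ξ))] at h2
    rw [smul_smul] at h2
    norm_num at h2
    -- h2 : Φ(c j)(Φ x ξ) = Φ(c j)(Φ x ξ) ... need care
    -- From h: Φ x ξ = 2⁻¹ • (Φ(c j)(Φ x ξ) + Φ x ξ)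
    have h3 : (2:ℝ) • Φ x ξ = Φ (c j) (Φ x ξ) + Φ x ξ := by
      have := congrArg (fun v => (2:ℝ) • v) h
      simpa [smul_smul] using this
    have : Φ (c j) (Φ x ξ) = Φ x ξ := by
      have := h3
      rw [two_smul] at this
      linear_combination (norm := abel) this.symm
    exact this
  · intro ξ hξ
    rw [EJA.repSpace, Module.End.mem_eigenspace_iff] at hξ
    simpa using hξ
  · intro x' _ ξ _
    have h := congrArg (fun f : E →ₗ[ℝ] E => f ξ) (hmul x x')
    simpa using h
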